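/- arXiv:1811.03753 — 9 statements merged into one kernel-verified Lean document; each statement's English description precedes it below -/
import Mathlib

section
/- For any ultrafilter D on V, the relation ≤ on Q_D is transitive (and reflexive), so Q_D is a partial order: if p₁ ≤ p₂ and p₂ ≤ p₃ then p₁ ≤ p₃. -/
open Set

/-- `V = ⊕_{n<ω} 𝔽₂`, realized as finitely supported functions `ℕ →₀ 𝔽₂`. -/
abbrev V : Type := ℕ →₀ ZMod 2

/-- The convex hull (in `ω`) of a finite set of natural numbers. -/
def hull (s : Finset ℕ) : Set ℕ := {k | ∃ a ∈ s, ∃ b ∈ s, a ≤ k ∧ k ≤ b}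

/-- the translate `x + A` of a set `A ⊆ V`. -/
def vset (x : V) (A : Set V) : Set V := (fun a => x + a) '' A

/-- the span (as a set) of a finite set of vectors of `V`. -/
def spanOf (s : Finset V) : Set V := (Submodule.span (ZMod 2) (s : Set V) : Set V)

/-- A condition in the forcing `ℚ_D`: a pair `(u, 𝒜)` with `u ⊆ V` finite containing `0`,
the convex hulls of supports of distinct members of `u` disjoint, and `𝒜 ⊆ D` finite. -/
structure Cond (D : Ultrafilter V) where
  u : Finset V
  A : Finset (Set V)
  zero_mem : (0 : V) ∈ u
  supp_disj : ∀ x ∈ u, ∀ y ∈ u, x ≠ y → Disjoint (hull x.support) (hull y.support)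
  mem_D : ∀ B ∈ A, (B : Set V) ∈ D

/-- The order on `ℚ_D` from Definition 3. -/
def Cond.le {D : Ultrafilter V} (p q : Cond D) : Prop :=
  -- (B)(a)
  p.u ⊆ q.u ∧
  (∀ x ∈ p.u, ∀ y ∈ q.u \ p.u, ∀ i ∈ x.support, ∀ j ∈ y.support, i < j) ∧
  -- (B)(b)
  p.A ⊆ q.A ∧
  -- (B)(c)
  (∀ A ∈ q.A, A ∉ p.A →
    (∀ B ∈ p.A, A ⊆ B) ∧
    (∀ B ∈ p.A, ∀ x ∈ spanOf p.u, vset x B ∈ D → A ⊆ vset x B)) ∧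
  -- (B)(d)
  (∀ x ∈ spanOf p.u, ∀ y ∈ spanOf (q.u \ p.u), ∀ A ∈ p.A, vset x A ∈ D →
    y ∈ vset x A ∪ {0} ∧ vset (x + y) A ∈ D)


lemma V_add_self (v : V) : v + v = 0 := by
  ext n
  have : ∀ a : ZMod 2, a + a = 0 := by decide
  simp [this]

lemma spanOf_mono {s t : Finset V} (h : s ⊆ t) : spanOf s ⊆ spanOf t :=
  Submodule.span_mono (by exact_mod_cast h)

lemma spanOf_empty : spanOf (∅ : Finset V) = {0} := by
  simp [spanOf]

lemma mem_spanOf_union {s t : Finset V} {y : V} (h : y ∈ spanOf (s ∪ t)) :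
    ∃ a ∈ spanOf s, ∃ b ∈ spanOf t, y = a + b := by
  have : y ∈ Submodule.span (ZMod 2) ((s : Set V) ∪ (t : Set V)) := by
    simpa [spanOf] using h
  rw [Submodule.span_union, Submodule.mem_sup] at this
  obtain ⟨a, ha, b, hb, hab⟩ := this
  exact ⟨a, ha, b, hb, hab.symm⟩

/-- Observation 5: for any ultrafilter `D` on `V`, the relation `≤` on `ℚ_D` is
reflexive and transitive, so `ℚ_D` is a partial order. -/
theorem QD_partial_order (D : Ultrafilter V) :
    (∀ p : Cond D, p.le p) ∧
    (∀ p₁ p₂ p₃ : Cond D, p₁.le p₂ → p₂.le p₃ → p₁.le p₃) := by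
  constructor
  · intro p
    refine ⟨Finset.Subset.refl _, ?_, Finset.Subset.refl _, ?_, ?_⟩
    · intro x _ y hy
      simp [Finset.sdiff_self] at hy
    · intro A hA hA'; exact absurd hA hA'
    · intro x hx y hy A hA hxA
      rw [Finset.sdiff_self, spanOf_empty] at hy
      rcases hy with rfl
      exact ⟨Or.inr rfl, by simpa using hxA⟩
  · rintro p₁ p₂ p₃ ⟨ha12, ha12', hb12, hc12, hd12⟩ ⟨ha23, ha23', hb23, hc23, hd23⟩
    refine ⟨ha12.trans ha23, ?_, hb12.trans hb23, ?_, ?_⟩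
    · intro x hx y hy i hi j hj
      rcases Finset.mem_sdiff.1 hy with ⟨hy3, hy1⟩
      by_cases hy2 : y ∈ p₂.u
      · exact ha12' x hx y (Finset.mem_sdiff.2 ⟨hy2, hy1⟩) i hi j hj
      · exact ha23' x (ha12 hx) y (Finset.mem_sdiff.2 ⟨hy3, hy2⟩) i hi j hj
    · intro A hA hA1
      by_cases hA2 : A ∈ p₂.A
      · exact hc12 A hA2 hA1
      · obtain ⟨h1, h2⟩ := hc23 A hA hA2
        exact ⟨fun B hB => h1 B (hb12 hB),
          fun B hB x hx hxB => h2 B (hb12 hB) x (spanOf_mono ha12 hx) hxB⟩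
    · intro x hx y hy A hA hxA
      have hsplit : p₃.u \ p₁.u = (p₂.u \ p₁.u) ∪ (p₃.u \ p₂.u) := by
        ext z
        simp only [Finset.mem_sdiff, Finset.mem_union]
        constructor
        · rintro ⟨h3, h1⟩
          by_cases h2 : z ∈ p₂.u
          · exact Or.inl ⟨h2, h1⟩
          · exact Or.inr ⟨h3, h2⟩
        · rintro (⟨h2, h1⟩ | ⟨h3, h2⟩)
          · exact ⟨ha23 h2, h1⟩
          · exact ⟨h3, fun h => h2 (ha12 h)⟩
      rw [hsplit] at hy
      obtain ⟨y₂, hy₂, y₃, hy₃, rfl⟩ := mem_spanOf_union hy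
      obtain ⟨hy₂mem, hD2⟩ := hd12 x hx y₂ hy₂ A hA hxA
      have hx2 : x + y₂ ∈ spanOf p₂.u := by
        have h1 : x ∈ Submodule.span (ZMod 2) (p₂.u : Set V) :=
          spanOf_mono ha12 hx
        have h2 : y₂ ∈ Submodule.span (ZMod 2) (p₂.u : Set V) :=
          spanOf_mono (Finset.sdiff_subset) hy₂
        exact Submodule.add_mem _ h1 h2
      obtain ⟨hy₃mem, hD3⟩ := hd23 (x + y₂) hx2 y₃ hy₃ A (hb12 hA) hD2
      have hfinD : vset (x + (y₂ + y₃)) A ∈ D := by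
        have : x + y₂ + y₃ = x + (y₂ + y₃) := add_assoc x y₂ y₃
        rwa [this] at hD3
      refine ⟨?_, hfinD⟩
      rcases hy₂mem with hy₂mem | hy₂0
      · rcases hy₃mem with hy₃mem | hy₃0
        · obtain ⟨a, ha, hae⟩ := hy₃mem
          left
          refine ⟨a, ha, ?_⟩
          show x + a = y₂ + y₃
          have hae' : y₃ = x + y₂ + a := hae.symm
          rw [hae']
          have h2 : y₂ + (x + y₂ + a) = (y₂ + y₂) + (x + a) := by abel
          rw [h2, V_add_self, zero_add]
        · rcases hy₃0 with rfl
          rw [add_zero]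
          exact Or.inl hy₂mem
      · rcases hy₂0 with rfl
        rw [zero_add]
        rcases hy₃mem with hy₃mem | hy₃0
        · obtain ⟨a, ha, hae⟩ := hy₃mem
          left
          refine ⟨a, ha, ?_⟩
          show x + a = y₃
          have h : x + 0 + a = y₃ := hae
          simpa using h
        · exact Or.inr hy₃0
end

section
/- For any ultrafilter D on V: if p ∈ Q_D and B₁ ∈ D, then there exist q ∈ Q_D and B₂ ∈ 𝒜_q such that p ≤ q and B₂ ⊆ B₁. In fact q = (u_p, 𝒜_p ∪ {B₂}) works, where B₂ = B₁ ∩ ⋂{x+A : x ∈ span(u_p), A ∈ 𝒜_p, x+A ∈ D}. -/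
open Set

open scoped Classical in
/-- Observation 6: if `p ∈ ℚ_D` and `B₁ ∈ D`, there are `q ∈ ℚ_D` and `B₂ ∈ 𝒜_q` with
`p ≤ q` and `B₂ ⊆ B₁`; in fact `q = (u_p, 𝒜_p ∪ {B₂})` works, where
`B₂ = B₁ ∩ ⋂ {x+A : x ∈ span(u_p), A ∈ 𝒜_p, x+A ∈ D}`. -/
theorem QD_extend_below (D : Ultrafilter V) (p : Cond D) (B₁ : Set V) (hB₁ : B₁ ∈ D) :
    ∃ (q : Cond D) (B₂ : Set V),
      B₂ = B₁ ∩ ⋂₀ {s : Set V | ∃ x ∈ spanOf p.u, ∃ A ∈ p.A, vset x A ∈ D ∧ s = vset x A} ∧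
      q.u = p.u ∧ q.A = insert B₂ p.A ∧
      B₂ ∈ q.A ∧ p.le q ∧ B₂ ⊆ B₁ := by
  set S : Set (Set V) :=
    {s : Set V | ∃ x ∈ spanOf p.u, ∃ A ∈ p.A, vset x A ∈ D ∧ s = vset x A} with hS
  have hspanfin : (spanOf p.u).Finite := by
    have h : Module.Finite (ZMod 2) (Submodule.span (ZMod 2) (p.u : Set V)) :=
      Module.Finite.iff_fg.mpr (Submodule.fg_span p.u.finite_toSet)
    have : Finite (Submodule.span (ZMod 2) (p.u : Set V)) := Module.finite_of_finite (ZMod 2)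
    exact Set.toFinite ((Submodule.span (ZMod 2) (p.u : Set V) : Submodule (ZMod 2) V) : Set V)
  have hSfin : S.Finite := by
    apply Set.Finite.subset (Set.Finite.image (fun xa : V × Set V => vset xa.1 xa.2)
      (hspanfin.prod p.A.finite_toSet))
    rintro s ⟨x, hx, A, hA, _, rfl⟩
    exact ⟨(x, A), ⟨hx, hA⟩, rfl⟩
  have hSD : ∀ s ∈ S, s ∈ D := by
    rintro s ⟨x, hx, A, hA, hD, rfl⟩; exact hD
  set B₂ : Set V := B₁ ∩ ⋂₀ S with hB₂
  have hB₂D : B₂ ∈ D := by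
    apply Filter.inter_mem hB₁
    exact (Filter.sInter_mem hSfin).mpr hSD
  have hB₂sub : ∀ s ∈ S, B₂ ⊆ s := fun s hs =>
    (Set.inter_subset_right).trans (Set.sInter_subset_of_mem hs)
  have hzero : (0 : V) ∈ spanOf p.u := Submodule.zero_mem _
  have hvset0 : ∀ B : Set V, vset 0 B = B := by
    intro B; simp [vset]
  refine ⟨⟨p.u, insert B₂ p.A, p.zero_mem, p.supp_disj, ?_⟩, B₂, rfl, rfl, rfl,
    Finset.mem_insert_self _ _, ?_, Set.inter_subset_left⟩
  · intro B hB
    rcases Finset.mem_insert.mp hB with rfl | hB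
    · exact hB₂D
    · exact p.mem_D B hB
  · refine ⟨Finset.Subset.refl _, ?_, Finset.subset_insert _ _, ?_, ?_⟩
    · intro x hx y hy
      simp at hy
    · intro A hA hA'
      have hAB : A = B₂ := by
        rcases Finset.mem_insert.mp hA with h | h
        · exact h
        · exact absurd h hA'
      subst hAB
      constructor
      · intro B hB
        have : B ∈ S := ⟨0, hzero, B, hB, by rw [hvset0]; exact p.mem_D B hB, (hvset0 B).symm⟩
        exact (hB₂sub B this)
      · intro B hB x hx hxB
        exact hB₂sub _ ⟨x, hx, B, hB, hxB, rfl⟩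
    · intro x hx y hy A hA hxA
      have hy0 : y = 0 := by
        have : spanOf (p.u \ p.u) = {0} := by
          simp [spanOf, Finset.sdiff_self]
        rw [this] at hy
        exact hy
      subst hy0
      refine ⟨Or.inr rfl, ?_⟩
      rwa [add_zero]
end

section
/- For any ultrafilter D on V and any B ∈ D, the set I = {q ∈ Q_D : there is A ∈ 𝒜_q with A ⊆ B} is dense in Q_D (every p ∈ Q_D has an extension in I), and moreover for every q ∈ I and every r ∈ Q_D with q ≤ r, span(u_r \ u_q) ⊆ B ∪ {0}. -/
open Set

lemma spanOf_finite (s : Finset V) : (spanOf s).Finite := by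
  haveI : Module.Finite (ZMod 2) (Submodule.span (ZMod 2) (s : Set V)) :=
    Module.Finite.span_of_finite _ s.finite_toSet
  haveI : Finite (Submodule.span (ZMod 2) (s : Set V)) := Module.finite_of_finite (ZMod 2)
  exact (Submodule.span (ZMod 2) (s : Set V) : Set V).toFinite

lemma zero_mem_spanOf (s : Finset V) : (0 : V) ∈ spanOf s :=
  (Submodule.span (ZMod 2) (s : Set V)).zero_mem

lemma vset_zero (A : Set V) : vset 0 A = A := by
  simp [vset]

/-- Observation 7: for `B ∈ D`, the set `I = {q ∈ ℚ_D : ∃ A ∈ 𝒜_q, A ⊆ B}` is dense in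
`ℚ_D`, and for every `q ∈ I` and every `r ≥ q`, `span(u_r \ u_q) ⊆ B ∪ {0}`. -/
theorem QD_dense_capture (D : Ultrafilter V) (B : Set V) (hB : B ∈ D) :
    (∀ p : Cond D, ∃ q : Cond D, p.le q ∧ ∃ A ∈ q.A, A ⊆ B) ∧
    (∀ q : Cond D, (∃ A ∈ q.A, A ⊆ B) →
      ∀ r : Cond D, q.le r → spanOf (r.u \ q.u) ⊆ B ∪ {0}) := by
  classical
  constructor
  · intro p
    set S : Set (Set V) :=
      ↑p.A ∪ {C | ∃ x ∈ spanOf p.u, ∃ B' ∈ p.A, C = vset x B' ∧ C ∈ D} with hS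
    have hSfin : S.Finite := by
      apply (p.A.finite_toSet).union
      apply Set.Finite.subset (Set.Finite.image2 vset (spanOf_finite p.u) p.A.finite_toSet)
      rintro C ⟨x, hx, B', hB', rfl, -⟩
      exact Set.mem_image2_of_mem hx hB'
    have hSD : ∀ C ∈ S, C ∈ D := by
      rintro C (hC | ⟨x, hx, B', hB', rfl, hCD⟩)
      · exact p.mem_D C hC
      · exact hCD
    set A' : Set V := B ∩ ⋂₀ S with hA'
    have hA'D : A' ∈ D := Filter.inter_mem hB ((Filter.sInter_mem hSfin).2 hSD)
    have hA'sub : ∀ C ∈ S, A' ⊆ C := fun C hC v hv => hv.2 C hC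
    refine ⟨⟨p.u, insert A' p.A, p.zero_mem, p.supp_disj, ?_⟩, ?_, A',
      Finset.mem_insert_self _ _, Set.inter_subset_left⟩
    · intro C hC
      rcases Finset.mem_insert.1 hC with rfl | hC
      · exact hA'D
      · exact p.mem_D C hC
    refine ⟨subset_rfl, ?_, Finset.subset_insert _ _, ?_, ?_⟩
    · intro x _ y hy
      simp at hy
    · intro A hA hAnot
      rcases Finset.mem_insert.1 hA with rfl | hA
      · refine ⟨fun B' hB' => hA'sub B' (Or.inl hB'), ?_⟩
        intro B' hB' x hx hxD
        exact hA'sub _ (Or.inr ⟨x, hx, B', hB', rfl, hxD⟩)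
      · exact absurd hA hAnot
    · intro x hx y hy A hA hAD
      have hy0 : y = 0 := by
        rw [Finset.sdiff_self, spanOf_empty] at hy
        exact hy
      subst hy0
      exact ⟨Or.inr rfl, by rwa [add_zero]⟩
  · rintro q ⟨A₀, hA₀, hA₀B⟩ r hle y hy
    have h0 : vset 0 A₀ ∈ D := by rw [vset_zero]; exact q.mem_D A₀ hA₀
    have h := (hle.2.2.2.2 0 (zero_mem_spanOf q.u) y hy A₀ hA₀ h0).1
    rw [vset_zero] at h
    rcases h with h | h
    · exact Or.inl (hA₀B h)
    · exact Or.inr h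
end

section
/- Let D be a nonprincipal ultrafilter on V such that every subspace of V of finite codimension belongs to D, and such that for every A ∈ D the set {v ∈ V : v+A ∈ D} belongs to D. Then every condition p ∈ Q_D has an extension q ∈ Q_D with |u_p| < |u_q|; in fact one may take q = (u_p ∪ {y}, 𝒜_p) for a suitable y ∈ V with max(supp x) < min(supp y) for all x ∈ u_p. -/
open Set

lemma vset_vset (a b : V) (A : Set V) : vset a (vset b A) = vset (a + b) A := by
  simp only [vset, Set.image_image, add_assoc]

open scoped Classical in
/-- Observation 13: if `D` is a nonprincipal ultrafilter on `V` containing all subspaces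
of finite codimension and satisfying `A ∈ D → {v : v+A ∈ D} ∈ D`, then every `p ∈ ℚ_D`
has an extension `q` with `|u_p| < |u_q|`; in fact `q = (u_p ∪ {y}, 𝒜_p)` for a suitable
`y` whose support lies entirely above the supports of members of `u_p`. -/
theorem QD_conditions_grow (D : Ultrafilter V)
    (hnp : ∀ v : V, ({v} : Set V) ∉ D)
    (hcodim : ∀ W : Submodule (ZMod 2) V, Module.Finite (ZMod 2) (V ⧸ W) → (W : Set V) ∈ D)
    (hshift : ∀ A ∈ D, {v : V | vset v A ∈ D} ∈ D) :
    ∀ p : Cond D, ∃ (q : Cond D) (y : V),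
      q.u = insert y p.u ∧ q.A = p.A ∧ p.le q ∧ p.u.card < q.u.card ∧
      (∀ x ∈ p.u, ∀ i ∈ x.support, ∀ j ∈ y.support, i < j) := by
  intro p
  -- N : bound on supports of members of p.u
  set N : ℕ := p.u.sup (fun x => x.support.sup id) with hN
  have hbound : ∀ x ∈ p.u, ∀ i ∈ x.support, i ≤ N := by
    intro x hx i hi
    exact le_trans (Finset.le_sup (f := id) hi) (Finset.le_sup (f := fun x => x.support.sup id) hx)
  -- the subspace W of vectors supported above N
  set φ : V →ₗ[ZMod 2] (Fin (N + 1) → ZMod 2) :=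
    LinearMap.pi (fun i : Fin (N + 1) => Finsupp.lapply i.1) with hφ
  set W : Submodule (ZMod 2) V := LinearMap.ker φ with hW
  have hWmem : ∀ v : V, v ∈ W ↔ ∀ i ≤ N, v i = 0 := by
    intro v
    constructor
    · intro hv i hi
      have := congrFun (LinearMap.mem_ker.mp hv) ⟨i, Nat.lt_succ_of_le hi⟩
      simpa [hφ, Finsupp.lapply] using this
    · intro h
      rw [LinearMap.mem_ker]
      funext i
      simpa [hφ, Finsupp.lapply] using h i.1 (Nat.lt_succ_iff.mp i.2)
  have hWD : (W : Set V) ∈ D := by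
    apply hcodim
    have e := φ.quotKerEquivRange
    have : Finite (V ⧸ W) := Finite.of_equiv _ e.symm.toEquiv
    exact Module.Finite.of_finite
  -- the finite index set of constraints
  set P : Set (V × Set V) := {z | z.1 ∈ spanOf p.u ∧ z.2 ∈ p.A} with hP
  have hspanfin : (spanOf p.u).Finite := by
    haveI : Module.Finite (ZMod 2) (Submodule.span (ZMod 2) ((p.u : Set V)))
        := Module.Finite.span_of_finite _ p.u.finite_toSet
    haveI : Finite (Submodule.span (ZMod 2) ((p.u : Set V))) :=
      Module.finite_of_finite (ZMod 2)
    exact (Submodule.span (ZMod 2) ((p.u : Set V)) : Set V).toFinite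
  have hPfin : P.Finite := by
    apply Set.Finite.subset (hspanfin.prod p.A.finite_toSet)
    intro z hz; exact ⟨hz.1, hz.2⟩
  -- the good set for each constraint
  set f : V × Set V → Set V := fun z =>
    if h : vset z.1 z.2 ∈ D then vset z.1 z.2 ∩ {v | vset v (vset z.1 z.2) ∈ D}
    else Set.univ with hf
  have hfD : ∀ z, f z ∈ D := by
    intro z
    by_cases h : vset z.1 z.2 ∈ D
    · simp only [hf, dif_pos h]
      exact D.toFilter.inter_mem h (hshift _ h)
    · simp only [hf, dif_neg h]
      exact Filter.univ_mem
  have hGD : ((W : Set V) ∩ ({0}ᶜ) ∩ ⋂ z ∈ P, f z) ∈ D := by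
    refine D.toFilter.inter_mem (D.toFilter.inter_mem hWD ?_) ?_
    · exact (Ultrafilter.compl_mem_iff_notMem).mpr (hnp 0)
    · exact (Filter.biInter_mem hPfin).mpr (fun z _ => hfD z)
  obtain ⟨y, hy⟩ := Filter.nonempty_of_mem hGD
  obtain ⟨⟨hyW, hy0⟩, hyP⟩ := hy
  have hy0' : y ≠ 0 := by simpa using hy0
  have hysupp : ∀ j ∈ y.support, N < j := by
    intro j hj
    by_contra h
    exact (Finsupp.mem_support_iff.mp hj) ((hWmem y).mp hyW j (not_lt.mp h))
  have hynotmem : y ∉ p.u := by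
    intro hmem
    obtain ⟨j, hj⟩ := Finsupp.support_nonempty_iff.mpr hy0'
    exact absurd (hbound y hmem j hj) (not_le.mpr (hysupp j hj))
  have hkey : ∀ x ∈ spanOf p.u, ∀ A ∈ p.A, vset x A ∈ D →
      y ∈ vset x A ∧ vset (x + y) A ∈ D := by
    intro x hx A hA hxA
    have hz : ((x, A) : V × Set V) ∈ P := ⟨hx, hA⟩
    have := Set.mem_iInter₂.mp hyP (x, A) hz
    rw [hf] at this
    simp only [dif_pos hxA] at this
    refine ⟨this.1, ?_⟩
    have h2 : vset y (vset x A) ∈ D := this.2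
    rwa [vset_vset, add_comm y x] at h2
  -- build q
  refine ⟨⟨insert y p.u, p.A, Finset.mem_insert_of_mem p.zero_mem, ?_, p.mem_D⟩, y,
    rfl, rfl, ?_, ?_, ?_⟩
  · -- supp_disj
    intro a ha b hb hab
    rcases Finset.mem_insert.mp ha with ha' | ha' <;>
      rcases Finset.mem_insert.mp hb with hb' | hb'
    · exact absurd (ha'.trans hb'.symm) hab
    · subst ha'
      rw [Set.disjoint_left]
      rintro k ⟨c, hc, d, hd, hck, hkd⟩ ⟨c', hc', d', hd', hck', hkd'⟩
      have h1 : N < c := hysupp c hc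
      have h2 : d' ≤ N := hbound b hb' d' hd'
      omega
    · subst hb'
      rw [Set.disjoint_left]
      rintro k ⟨c, hc, d, hd, hck, hkd⟩ ⟨c', hc', d', hd', hck', hkd'⟩
      have h1 : N < c' := hysupp c' hc'
      have h2 : d ≤ N := hbound a ha' d hd
      omega
    · exact p.supp_disj a ha' b hb' hab
  · -- p.le q
    refine ⟨Finset.subset_insert _ _, ?_, le_refl _, ?_, ?_⟩
    · intro x hx z hz i hi j hj
      have hz' : z = y := by
        rcases Finset.mem_sdiff.mp hz with ⟨hz1, hz2⟩
        rcases Finset.mem_insert.mp hz1 with h | h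
        · exact h
        · exact absurd h hz2
      subst hz'
      exact lt_of_le_of_lt (hbound x hx i hi) (hysupp j hj)
    · intro A hA hA'
      exact absurd hA hA'
    · -- (B)(d)
      intro x hx z hz A hA hxA
      have husdiff : (insert y p.u : Finset V) \ p.u = {y} := by
        ext a
        simp only [Finset.mem_sdiff, Finset.mem_insert, Finset.mem_singleton]
        constructor
        · rintro ⟨h1 | h1, h2⟩
          · exact h1
          · exact absurd h1 h2
        · rintro rfl; exact ⟨Or.inl rfl, hynotmem⟩
      rw [husdiff] at hz
      have hz' : z = 0 ∨ z = y := by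
        simp only [spanOf, Finset.coe_singleton, SetLike.mem_coe,
          Submodule.mem_span_singleton] at hz
        obtain ⟨c, rfl⟩ := hz
        fin_cases c
        · left; show (0 : ZMod 2) • y = 0; simp
        · right
          show (1 : ZMod 2) • y = y
          simp
      rcases hz' with rfl | rfl
      · refine ⟨Or.inr rfl, ?_⟩
        rwa [add_zero]
      · obtain ⟨h1, h2⟩ := hkey x hx A hA hxA
        exact ⟨Or.inl h1, h2⟩
  · -- card
    rw [Finset.card_insert_of_notMem hynotmem]
    omega
  · intro x hx i hi j hj
    exact lt_of_le_of_lt (hbound x hx i hi) (hysupp j hj)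
end

section
/- Let 𝒜 be an infinite family of pairwise almost disjoint infinite-dimensional subspaces of V. Then there exists a nonprincipal ultrafilter D on V such that: (a) no member of 𝒜 (viewed as a subset of V) belongs to D; (b) for every A ∈ D, the set {v ∈ V : v+A ∈ D} belongs to D; (c) every subspace of V of finite codimension belongs to D. -/
open Set

/-- The basis vectors `x_n` of `V`. -/
noncomputable def xb (n : ℕ) : V := Finsupp.single n 1

/-- `S[n] = (⊕_{l<n} 𝔽₂ x_l) + S`. -/
def brack (S : Submodule (ZMod 2) V) (n : ℕ) : Set V :=
  {v | ∃ w ∈ Submodule.span (ZMod 2) {z : V | ∃ l < n, z = xb l}, ∃ s ∈ S, v = w + s}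

attribute [local instance] Ultrafilter.add Ultrafilter.addSemigroup

namespace Fact9

lemma add_self {M : Type*} [AddCommMonoid M] [Module (ZMod 2) M] (x : M) : x + x = 0 := by
  have h := two_smul (ZMod 2) x
  rwa [show (2 : ZMod 2) = 0 from rfl, zero_smul, eq_comm] at h

lemma quot_finite {W : Submodule (ZMod 2) V} (h : Module.Finite (ZMod 2) (V ⧸ W)) :
    Finite (V ⧸ W) :=
  Module.finite_of_finite (ZMod 2)

lemma finCodim_inf {W₁ W₂ : Submodule (ZMod 2) V}
    (h₁ : Module.Finite (ZMod 2) (V ⧸ W₁)) (h₂ : Module.Finite (ZMod 2) (V ⧸ W₂)) :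
    Module.Finite (ZMod 2) (V ⧸ (W₁ ⊓ W₂)) := by
  haveI := quot_finite h₁
  haveI := quot_finite h₂
  set f : V →ₗ[ZMod 2] (V ⧸ W₁) × (V ⧸ W₂) := W₁.mkQ.prod W₂.mkQ with hf
  have hker : W₁ ⊓ W₂ = LinearMap.ker f := by
    rw [hf, LinearMap.ker_prod, Submodule.ker_mkQ, Submodule.ker_mkQ]
  have hinj : Function.Injective ((W₁ ⊓ W₂).liftQ f hker.le) := by
    rw [← LinearMap.ker_eq_bot]
    exact Submodule.ker_liftQ_eq_bot' _ f hker
  haveI : Finite (V ⧸ (W₁ ⊓ W₂)) := Finite.of_injective _ hinj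
  infer_instance

/-- the coset `v + S` -/
def coset (S : Submodule (ZMod 2) V) (v : V) : Set V := (fun a => v + a) '' (S : Set V)

lemma mem_coset_iff {S : Submodule (ZMod 2) V} {v x : V} :
    x ∈ coset S v ↔ v + x ∈ S := by
  constructor
  · rintro ⟨s, hs, rfl⟩
    rwa [← add_assoc, add_self, zero_add]
  · intro h
    exact ⟨v + x, h, by show v + (v + x) = x; rw [← add_assoc, add_self, zero_add]⟩

/-- a subspace with finite intersection with a finite-codimension subspace is finite -/
lemma finite_of_inter_finite {S W : Submodule (ZMod 2) V}
    (hW : Module.Finite (ZMod 2) (V ⧸ W)) (h : ((S : Set V) ∩ (W : Set V)).Finite) :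
    (S : Set V).Finite := by
  haveI := quot_finite hW
  have hsub : (S : Set V) ⊆ ⋃ c : V ⧸ W, {x | x ∈ (S : Set V) ∧ W.mkQ x = c} :=
    fun x hx => mem_iUnion.2 ⟨W.mkQ x, hx, rfl⟩
  refine Set.Finite.subset (Set.finite_iUnion fun c => ?_) hsub
  rcases eq_empty_or_nonempty {x | x ∈ (S : Set V) ∧ W.mkQ x = c} with he | ⟨s₀, hs₀S, hs₀c⟩
  · rw [he]; exact finite_empty
  · have hss : {x | x ∈ (S : Set V) ∧ W.mkQ x = c} ⊆
        (fun x => x + s₀) ⁻¹' ((S : Set V) ∩ (W : Set V)) := by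
      rintro x ⟨hxS, hxc⟩
      refine ⟨S.add_mem hxS hs₀S, ?_⟩
      have h0 : W.mkQ (x + s₀) = 0 := by rw [map_add, hxc, hs₀c, add_self]
      rwa [Submodule.mkQ_apply, Submodule.Quotient.mk_eq_zero] at h0
    exact (h.preimage (add_left_injective s₀).injOn).subset hss

lemma coset_inter_finite {S S' : Submodule (ZMod 2) V}
    (h : ((S : Set V) ∩ (S' : Set V)).Finite) (v : V) :
    ((S : Set V) ∩ coset S' v).Finite := by
  rcases eq_empty_or_nonempty ((S : Set V) ∩ coset S' v) with he | ⟨x₀, hx₀S, hx₀c⟩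
  · rw [he]; exact finite_empty
  · have hss : (S : Set V) ∩ coset S' v ⊆
        (fun x => x + x₀) ⁻¹' ((S : Set V) ∩ (S' : Set V)) := by
      rintro x ⟨hxS, hxc⟩
      refine ⟨S.add_mem hxS hx₀S, ?_⟩
      rw [mem_coset_iff] at hxc hx₀c
      have := S'.add_mem hxc hx₀c
      have heq : v + x + (v + x₀) = x + x₀ := by
        have : v + x + (v + x₀) = (v + v) + (x + x₀) := by abel
        rw [this, add_self, zero_add]
      rwa [heq] at this
    exact (h.preimage (add_left_injective x₀).injOn).subset hss

lemma S_infinite {S : Submodule (ZMod 2) V} (h : ¬ Module.Finite (ZMod 2) ↥S) :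
    (S : Set V).Infinite := by
  intro hfin
  haveI : Finite ↥S := hfin.to_subtype
  exact h inferInstance

/-- the family of sets generating the filter -/
def fam (𝒜 : Set (Submodule (ZMod 2) V)) : Set (Set V) :=
  {A | (∃ W : Submodule (ZMod 2) V, Module.Finite (ZMod 2) (V ⧸ W) ∧ A = ↑W) ∨
       (∃ S ∈ 𝒜, ∃ v : V, A = (coset S v)ᶜ)}

lemma fip (𝒜 : Set (Submodule (ZMod 2) V)) (hinf : 𝒜.Infinite)
    (hdim : ∀ S ∈ 𝒜, ¬ Module.Finite (ZMod 2) ↥S)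
    (had : ∀ S₁ ∈ 𝒜, ∀ S₂ ∈ 𝒜, S₁ ≠ S₂ → ((S₁ : Set V) ∩ (S₂ : Set V)).Finite)
    (T : Finset (Set V)) (hT : ↑T ⊆ fam 𝒜) : (⋂₀ (↑T : Set (Set V))).Nonempty := by
  have key : ∀ T : Finset (Set V), ↑T ⊆ fam 𝒜 →
      ∃ (W : Submodule (ZMod 2) V) (C : Set ((Submodule (ZMod 2) V) × V)),
        Module.Finite (ZMod 2) (V ⧸ W) ∧ C.Finite ∧ (∀ p ∈ C, p.1 ∈ 𝒜) ∧
        ((W : Set V) \ ⋃ p ∈ C, coset p.1 p.2) ⊆ ⋂₀ (↑T : Set (Set V)) := by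
    classical
    intro T
    induction T using Finset.induction_on with
    | empty =>
      intro _
      haveI : Subsingleton (V ⧸ (⊤ : Submodule (ZMod 2) V)) :=
        Submodule.Quotient.subsingleton_iff.mpr rfl
      exact ⟨⊤, ∅, inferInstance, finite_empty, by simp, by simp⟩
    | insert _ _ hA ih =>
      rename_i A T'
      intro hsub
      obtain ⟨W, C, hWfin, hCfin, hC𝒜, hWsub⟩ :=
        ih (fun x hx => hsub (by simp [hx]))
      have hAmem : A ∈ fam 𝒜 := hsub (by simp)
      rcases hAmem with ⟨W', hW', rfl⟩ | ⟨S, hS, v, rfl⟩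
      · refine ⟨W ⊓ W', C, finCodim_inf hWfin hW', hCfin, hC𝒜, ?_⟩
        rintro x ⟨hxW, hxC⟩
        rw [Finset.coe_insert, sInter_insert]
        exact ⟨(Submodule.mem_inf.1 hxW).2, hWsub ⟨(Submodule.mem_inf.1 hxW).1, hxC⟩⟩
      · refine ⟨W, insert (S, v) C, hWfin, hCfin.insert _, ?_, ?_⟩
        · rintro p hp
          rcases hp with rfl | hp
          · exact hS
          · exact hC𝒜 p hp
        · rintro x ⟨hxW, hxC⟩
          rw [Finset.coe_insert, sInter_insert]
          constructor
          · intro hxc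
            exact hxC (mem_iUnion₂.2 ⟨(S, v), mem_insert _ _, hxc⟩)
          · refine hWsub ⟨hxW, fun hm => hxC ?_⟩
            rcases mem_iUnion₂.1 hm with ⟨p, hp, hxp⟩
            exact mem_iUnion₂.2 ⟨p, Set.mem_insert_of_mem _ hp, hxp⟩
  obtain ⟨W, C, hWfin, hCfin, hC𝒜, hWsub⟩ := key T hT
  obtain ⟨S, hS𝒜, hSnot⟩ : ∃ S ∈ 𝒜, S ∉ Prod.fst '' C := by
    obtain ⟨S, hS⟩ := (hinf.diff (hCfin.image Prod.fst)).nonempty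
    exact ⟨S, hS.1, hS.2⟩
  have hSW : ((S : Set V) ∩ (W : Set V)).Infinite := by
    intro hfin
    exact S_infinite (hdim S hS𝒜) (finite_of_inter_finite hWfin hfin)
  have hrem : (⋃ p ∈ C, (S : Set V) ∩ coset p.1 p.2).Finite := by
    refine hCfin.biUnion fun p hp => ?_
    exact coset_inter_finite
      (had S hS𝒜 p.1 (hC𝒜 p hp) (fun h => hSnot ⟨p, hp, h.symm⟩)) p.2
  obtain ⟨x, hx⟩ := (hSW.diff hrem).nonempty
  refine ⟨x, hWsub ⟨hx.1.2, fun hxU => ?_⟩⟩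
  rcases mem_iUnion₂.1 hxU with ⟨p, hp, hxc⟩
  exact hx.2 (mem_iUnion₂.2 ⟨p, hp, hx.1.1, hxc⟩)

end Fact9

open Fact9 in
/-- Fact 9: if `𝒜` is an infinite family of pairwise almost disjoint infinite-dimensional
subspaces of `V`, then there is a nonprincipal ultrafilter `D` on `V` disjoint from `𝒜`,
containing all subspaces of finite codimension, and such that `A ∈ D` implies
`v + A ∈ D` for `D`-almost all `v`. -/
theorem exists_good_ultrafilter (𝒜 : Set (Submodule (ZMod 2) V)) (hinf : 𝒜.Infinite)
    (hdim : ∀ S ∈ 𝒜, ¬ Module.Finite (ZMod 2) ↥S)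
    (had : ∀ S₁ ∈ 𝒜, ∀ S₂ ∈ 𝒜, S₁ ≠ S₂ → ((S₁ : Set V) ∩ (S₂ : Set V)).Finite) :
    ∃ D : Ultrafilter V,
      (∀ v : V, ({v} : Set V) ∉ D) ∧
      (∀ S ∈ 𝒜, (S : Set V) ∉ D) ∧
      (∀ A ∈ D, {v : V | (fun a => v + a) '' A ∈ D} ∈ D) ∧
      (∀ W : Submodule (ZMod 2) V, Module.Finite (ZMod 2) (V ⧸ W) → (W : Set V) ∈ D) := by
  -- a filter from the family
  obtain ⟨D₀, hD₀⟩ := Ultrafilter.exists_ultrafilter_of_finite_inter_nonempty (fam 𝒜)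
    (fun T hT => fip 𝒜 hinf hdim had T hT)
  -- the closed subsemigroup
  set G : Set (Ultrafilter V) := {U | ∀ A ∈ fam 𝒜, A ∈ U} with hG
  have hGne : G.Nonempty := ⟨D₀, fun A hA => hD₀ hA⟩
  have hGclosed : IsClosed G := by
    have : G = ⋂ A ∈ fam 𝒜, {U : Ultrafilter V | A ∈ U} := by
      ext U; simp [hG, Set.mem_iInter₂]
    rw [this]
    exact isClosed_biInter fun A _ => ultrafilter_isClosed_basic A
  have hGadd : ∀ U ∈ G, ∀ U' ∈ G, U + U' ∈ G := by
    intro U hU U' hU' A hA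
    have : ∀ᶠ m in ↑(U + U'), m ∈ A := by
      rw [Ultrafilter.eventually_add]
      rcases hA with ⟨W, hWfin, rfl⟩ | ⟨S, hS, v, rfl⟩
      · have h1 : ∀ᶠ m in ↑U, m ∈ (W : Set V) := hU _ (Or.inl ⟨W, hWfin, rfl⟩)
        have h2 : ∀ᶠ m in ↑U', m ∈ (W : Set V) := hU' _ (Or.inl ⟨W, hWfin, rfl⟩)
        filter_upwards [h1] with m hm
        filter_upwards [h2] with m' hm'
        exact W.add_mem hm hm'
      · refine Filter.Eventually.of_forall fun m => ?_
        have h2 : ∀ᶠ m' in ↑U', m' ∈ (coset S (v + m))ᶜ :=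
          hU' _ (Or.inr ⟨S, hS, v + m, rfl⟩)
        filter_upwards [h2] with m' hm'
        intro hmem
        apply hm'
        rw [mem_coset_iff] at hmem ⊢
        have heq : v + m + m' = v + (m + m') := by abel
        rwa [heq]
    exact this
  obtain ⟨D, hDG, hDidem⟩ := exists_idempotent_in_compact_add_subsemigroup
    Ultrafilter.continuous_add_left G hGne hGclosed.isCompact hGadd
  obtain ⟨S₀, hS₀⟩ := hinf.nonempty
  refine ⟨D, ?_, ?_, ?_, ?_⟩
  · -- nonprincipal
    intro v hsing
    have hc : (coset S₀ v)ᶜ ∈ D := hDG _ (Or.inr ⟨S₀, hS₀, v, rfl⟩)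
    obtain ⟨x, hx1, hx2⟩ := D.nonempty_of_mem (Filter.inter_mem hsing hc)
    rcases hx1 with rfl
    exact hx2 (mem_coset_iff.2 (by rw [add_self]; exact S₀.zero_mem))
  · -- no member of 𝒜
    intro S hS
    have hc : (coset S 0)ᶜ ∈ D := hDG _ (Or.inr ⟨S, hS, 0, rfl⟩)
    have hcs : coset S 0 = (S : Set V) := by
      ext x; rw [mem_coset_iff, zero_add]; rfl
    rw [hcs] at hc
    exact Ultrafilter.compl_mem_iff_notMem.mp hc
  · -- idempotence
    intro A hA
    have h : ∀ᶠ m in ↑(D + D), m ∈ A := by rw [hDidem]; exact hA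
    rw [Ultrafilter.eventually_add] at h
    refine Filter.mem_of_superset h ?_
    intro v hv
    have himg : (fun a => v + a) '' A = {x | v + x ∈ A} := by
      ext x
      constructor
      · rintro ⟨a, ha, rfl⟩
        show v + (v + a) ∈ A
        rwa [← add_assoc, add_self, zero_add]
      · intro hx
        exact ⟨v + x, hx, by show v + (v + x) = x; rw [← add_assoc, add_self, zero_add]⟩
    show (fun a => v + a) '' A ∈ D
    rw [himg]
    exact hv
  · -- finite codimension subspaces
    intro W hW
    exact hDG _ (Or.inl ⟨W, hW, rfl⟩)
end

section
/- Let S¹ ≠ S² be subspaces of V with S¹ ∩ S² finite, say |S¹ ∩ S²| = k. Then for every n < ω, |S¹[n] ∩ S²[n]| ≤ k·2^{2n}; in particular S¹[n] ∩ S²[n] is finite. -/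
open Set

lemma span_set_eq (n : ℕ) :
    {z : V | ∃ l < n, z = xb l} = Set.range (fun l : Fin n => xb l.val) := by
  ext z
  constructor
  · rintro ⟨l, hl, rfl⟩; exact ⟨⟨l, hl⟩, rfl⟩
  · rintro ⟨l, rfl⟩; exact ⟨l.val, l.isLt, rfl⟩

lemma mem_brack_decomp (S : Submodule (ZMod 2) V) (n : ℕ) (v : V) (hv : v ∈ brack S n) :
    ∃ c : Fin n → ZMod 2, v - (∑ l : Fin n, c l • xb l.val) ∈ S := by
  obtain ⟨w, hw, s, hs, rfl⟩ := hv
  rw [span_set_eq n, Submodule.mem_span_range_iff_exists_fun] at hw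
  obtain ⟨c, hc⟩ := hw
  exact ⟨c, by simpa [hc] using hs⟩

/-- Subclaim 1(a): if `S¹ ≠ S²` are subspaces of `V` with `|S¹ ∩ S²| = k` finite,
then `|S¹[n] ∩ S²[n]| ≤ k·2^{2n}`; in particular `S¹[n] ∩ S²[n]` is finite. -/
theorem brack_inter_finite (S₁ S₂ : Submodule (ZMod 2) V) (hne : S₁ ≠ S₂) (k : ℕ)
    (hfin : ((S₁ : Set V) ∩ (S₂ : Set V)).Finite)
    (hk : ((S₁ : Set V) ∩ (S₂ : Set V)).ncard = k) :
    ∀ n : ℕ, (brack S₁ n ∩ brack S₂ n).Finite ∧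
      (brack S₁ n ∩ brack S₂ n).ncard ≤ k * 2 ^ (2 * n) := by
  intro n
  classical
  set A : Set V := brack S₁ n ∩ brack S₂ n with hA
  -- decompositions
  have d1 : ∀ v : ↥A, ∃ c : Fin n → ZMod 2,
      (v : V) - (∑ l : Fin n, c l • xb l.val) ∈ S₁ :=
    fun v => mem_brack_decomp S₁ n v v.2.1
  have d2 : ∀ v : ↥A, ∃ c : Fin n → ZMod 2,
      (v : V) - (∑ l : Fin n, c l • xb l.val) ∈ S₂ :=
    fun v => mem_brack_decomp S₂ n v v.2.2
  choose c₁ hc₁ using d1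
  choose c₂ hc₂ using d2
  set ψ : ↥A → (Fin n → ZMod 2) × (Fin n → ZMod 2) := fun v => (c₁ v, c₂ v) with hψ
  have key : ∀ u v : ↥A, ψ u = ψ v → (u : V) - (v : V) ∈ (S₁ : Set V) ∩ (S₂ : Set V) := by
    intro u v h
    have h1 : c₁ u = c₁ v := congrArg Prod.fst h
    have h2 : c₂ u = c₂ v := congrArg Prod.snd h
    constructor
    · have := S₁.sub_mem (hc₁ u) (h1 ▸ hc₁ v)
      simpa using this
    · have := S₂.sub_mem (hc₂ u) (h2 ▸ hc₂ v)
      simpa using this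
  set v₀ : (Fin n → ZMod 2) × (Fin n → ZMod 2) → V := fun p =>
    if h : ∃ v : ↥A, ψ v = p then ((Classical.choose h : ↥A) : V) else 0 with hv₀
  have Fmem : ∀ v : ↥A, (v : V) - v₀ (ψ v) ∈ (S₁ : Set V) ∩ (S₂ : Set V) := by
    intro v
    have h : ∃ u : ↥A, ψ u = ψ v := ⟨v, rfl⟩
    have : v₀ (ψ v) = ((Classical.choose h : ↥A) : V) := dif_pos h
    rw [this]
    exact key v (Classical.choose h) (Classical.choose_spec h).symm
  set F : ↥A → ((Fin n → ZMod 2) × (Fin n → ZMod 2)) × ↥((S₁ : Set V) ∩ (S₂ : Set V)) :=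
    fun v => (ψ v, ⟨(v : V) - v₀ (ψ v), Fmem v⟩) with hF
  have hFinj : Function.Injective F := by
    intro u v h
    have h1 : ψ u = ψ v := congrArg Prod.fst h
    have h2 : (u : V) - v₀ (ψ u) = (v : V) - v₀ (ψ v) :=
      congrArg (fun x => (x.2 : V)) h
    rw [h1] at h2
    have : (u : V) = (v : V) := by
      have := sub_left_inj.mp h2
      exact this
    exact Subtype.ext this
  have hSfin : Finite ↥((S₁ : Set V) ∩ (S₂ : Set V)) := hfin.to_subtype
  have hAfin : Finite ↥A := Finite.of_injective F hFinj
  have hAfinite : A.Finite := Set.finite_coe_iff.mp hAfin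
  refine ⟨hAfinite, ?_⟩
  have hcard : Nat.card ↥A ≤
      Nat.card (((Fin n → ZMod 2) × (Fin n → ZMod 2)) × ↥((S₁ : Set V) ∩ (S₂ : Set V))) :=
    Nat.card_le_card_of_injective F hFinj
  have h1 : Nat.card ↥A = A.ncard := Nat.card_coe_set_eq A
  have h2 : Nat.card ↥((S₁ : Set V) ∩ (S₂ : Set V)) = k := by
    rw [Nat.card_coe_set_eq, hk]
  have h3 : Nat.card (Fin n → ZMod 2) = 2 ^ n := by
    simp [Nat.card_eq_fintype_card]
  rw [Nat.card_prod, Nat.card_prod, h1, h2, h3] at hcard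
  calc A.ncard ≤ 2 ^ n * 2 ^ n * k := hcard
    _ = k * 2 ^ (2 * n) := by rw [two_mul, pow_add]; ring
end

section
/- Let 𝒜 be an infinite family of pairwise almost disjoint infinite-dimensional subspaces of V. Then for every subspace W ⊆ V of finite codimension, every k < ω, all S₁, …, S_k ∈ 𝒜 and all n₁, …, n_k < ω, the set W ∩ (V \ S₁[n₁]) ∩ … ∩ (V \ S_k[n_k]) is nonempty; hence the family X = {V \ S[n] : S ∈ 𝒜, n < ω} ∪ {W : W a subspace of V of finite codimension} has the finite intersection property. -/
open Set

-- finite set ↔ Module.Finite for submodules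
lemma coe_finite_iff (p : Submodule (ZMod 2) V) :
    (p : Set V).Finite ↔ Module.Finite (ZMod 2) p := by
  rw [Set.Finite, Module.finite_iff_finite (R := ZMod 2)]
  exact Iff.rfl

-- Lemma B
lemma inf_infinite (p W : Submodule (ZMod 2) V) (hp : ¬ Module.Finite (ZMod 2) p)
    (hW : Module.Finite (ZMod 2) (V ⧸ W)) : ((p : Set V) ∩ (W : Set V)).Infinite := by
  intro hfin
  apply hp
  rw [← coe_finite_iff]
  have : Finite (V ⧸ W) := Module.finite_of_finite (ZMod 2)
  have : (p : Set V) = ⋃ q : V ⧸ W, {x | x ∈ p ∧ W.mkQ x = q} := by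
    ext x; simp
  rw [this]
  refine Set.finite_iUnion fun q => ?_
  by_cases hq : ∃ a, a ∈ p ∧ W.mkQ a = q
  · obtain ⟨a, hap, haq⟩ := hq
    have hsub : {x | x ∈ p ∧ W.mkQ x = q} ⊆ (fun y => a + y) '' ((p : Set V) ∩ W) := by
      rintro x ⟨hxp, hxq⟩
      refine ⟨x - a, ⟨sub_mem hxp hap, ?_⟩, by simp⟩
      exact (Submodule.Quotient.eq W).1
        (by rw [← Submodule.mkQ_apply, ← Submodule.mkQ_apply, hxq, haq])
    exact (hfin.image _).subset hsub
  · have : {x | x ∈ p ∧ W.mkQ x = q} = ∅ := by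
      ext x; simp only [Set.mem_setOf_eq, Set.mem_empty_iff_false, iff_false]
      exact fun h => hq ⟨x, h⟩
    exact this ▸ Set.finite_empty

-- Lemma C
lemma brack_inter_finite_s8 (S p : Submodule (ZMod 2) V) (n : ℕ)
    (h : ((S : Set V) ∩ (p : Set V)).Finite) :
    (brack S n ∩ (p : Set V)).Finite := by
  set Fs : Submodule (ZMod 2) V := Submodule.span (ZMod 2) {z : V | ∃ l < n, z = xb l}
  have hsetfin : ({z : V | ∃ l < n, z = xb l}).Finite := by
    have : {z : V | ∃ l < n, z = xb l} ⊆ xb '' {l | l < n} := by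
      rintro z ⟨l, hl, rfl⟩; exact ⟨l, hl, rfl⟩
    exact ((Set.finite_Iio n).image xb).subset this
  have hFfin : (Fs : Set V).Finite := by
    rw [coe_finite_iff]
    exact Module.Finite.span_of_finite _ hsetfin
  have hsub : brack S n ∩ (p : Set V) ⊆
      ⋃ w ∈ (Fs : Set V), ({v | ∃ s ∈ S, v = w + s} ∩ (p : Set V)) := by
    rintro v ⟨⟨w, hw, s, hs, rfl⟩, hvp⟩
    exact Set.mem_iUnion₂.2 ⟨w, hw, ⟨s, hs, rfl⟩, hvp⟩
  refine (Set.Finite.biUnion hFfin fun w _ => ?_).subset hsub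
  by_cases hne : ∃ a, a ∈ ({v | ∃ s ∈ S, v = w + s} ∩ (p : Set V))
  · obtain ⟨a, ⟨s₀, hs₀, rfl⟩, hap⟩ := hne
    have : {v | ∃ s ∈ S, v = w + s} ∩ (p : Set V) ⊆
        (fun y => (w + s₀) + y) '' ((S : Set V) ∩ (p : Set V)) := by
      rintro x ⟨⟨s, hs, rfl⟩, hxp⟩
      refine ⟨s - s₀, ⟨sub_mem hs hs₀, ?_⟩, by abel_nf⟩
      
      have : (w + s) - (w + s₀) = s - s₀ := by abel
      rw [← this]; exact sub_mem hxp hap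
    exact (h.image _).subset this
  · push_neg at hne
    have : {v | ∃ s ∈ S, v = w + s} ∩ (p : Set V) = ∅ := Set.eq_empty_iff_forall_notMem.2 hne
    simp [this]

-- finite codim closed under inf
lemma finCodim_inf (W₁ W₂ : Submodule (ZMod 2) V)
    (h₁ : Module.Finite (ZMod 2) (V ⧸ W₁)) (h₂ : Module.Finite (ZMod 2) (V ⧸ W₂)) :
    Module.Finite (ZMod 2) (V ⧸ (W₁ ⊓ W₂)) := by
  let f : V →ₗ[ZMod 2] (V ⧸ W₁) × (V ⧸ W₂) := LinearMap.prod W₁.mkQ W₂.mkQ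
  have hker : LinearMap.ker f = W₁ ⊓ W₂ := by
    ext x
    simp [f, LinearMap.mem_ker, LinearMap.prod_apply, Prod.ext_iff,
      Submodule.Quotient.mk_eq_zero]
  have e : (V ⧸ (W₁ ⊓ W₂)) ≃ₗ[ZMod 2] LinearMap.range f := by
    rw [← hker]; exact f.quotKerEquivRange
  have : Module.Finite (ZMod 2) (LinearMap.range f) := by infer_instance
  exact Module.Finite.equiv e.symm


/-- Subclaim 1: if `𝒜` is an infinite family of pairwise almost disjoint
infinite-dimensional subspaces of `V`, then for every subspace `W` of finite codimension
and all `S₁,…,S_k ∈ 𝒜`, `n₁,…,n_k < ω`, the set `W ∩ (V \ S₁[n₁]) ∩ … ∩ (V \ S_k[n_k])`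
is nonempty; hence the family
`X = {V \ S[n] : S ∈ 𝒜, n < ω} ∪ {W : W of finite codimension}` has the FIP. -/
theorem X_has_FIP (𝒜 : Set (Submodule (ZMod 2) V)) (hinf : 𝒜.Infinite)
    (hdim : ∀ S ∈ 𝒜, ¬ Module.Finite (ZMod 2) ↥S)
    (had : ∀ S₁ ∈ 𝒜, ∀ S₂ ∈ 𝒜, S₁ ≠ S₂ → ((S₁ : Set V) ∩ (S₂ : Set V)).Finite) :
    (∀ W : Submodule (ZMod 2) V, Module.Finite (ZMod 2) (V ⧸ W) →
      ∀ (k : ℕ) (S : Fin k → Submodule (ZMod 2) V) (n : Fin k → ℕ),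
        (∀ i, S i ∈ 𝒜) →
        ((W : Set V) ∩ ⋂ i, (Set.univ \ brack (S i) (n i))).Nonempty) ∧
    (∀ F : Finset (Set V),
      (↑F : Set (Set V)) ⊆ ({A | (∃ S ∈ 𝒜, ∃ n : ℕ, A = Set.univ \ brack S n) ∨
          (∃ W : Submodule (ZMod 2) V, Module.Finite (ZMod 2) (V ⧸ W) ∧ A = (W : Set V))}) →
      (⋂₀ (↑F : Set (Set V))).Nonempty) := by
  have main : ∀ W : Submodule (ZMod 2) V, Module.Finite (ZMod 2) (V ⧸ W) →
      ∀ (k : ℕ) (S : Fin k → Submodule (ZMod 2) V) (n : Fin k → ℕ),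
        (∀ i, S i ∈ 𝒜) →
        ((W : Set V) ∩ ⋂ i, (Set.univ \ brack (S i) (n i))).Nonempty := by
    intro W hW k S n hS
    obtain ⟨S₀, hS₀⟩ := (hinf.diff (Set.finite_range S)).nonempty
    have hS₀A : S₀ ∈ 𝒜 := hS₀.1
    have hS₀ne : ∀ i, S₀ ≠ S i := fun i h => hS₀.2 ⟨i, h.symm⟩
    have hP : ((S₀ : Set V) ∩ (W : Set V)).Infinite :=
      inf_infinite S₀ W (hdim S₀ hS₀A) hW
    have hbad : (⋃ i, (brack (S i) (n i) ∩ (S₀ : Set V))).Finite := by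
      refine Set.finite_iUnion fun i => ?_
      exact brack_inter_finite_s8 (S i) S₀ (n i)
        (had (S i) (hS i) S₀ hS₀A (fun h => hS₀ne i h.symm))
    obtain ⟨v, hv⟩ := (hP.diff hbad).nonempty
    obtain ⟨⟨hvS₀, hvW⟩, hvbad⟩ := hv
    refine ⟨v, hvW, ?_⟩
    rw [Set.mem_iInter]
    intro i
    refine ⟨trivial, fun hvb => hvbad ?_⟩
    exact Set.mem_iUnion.2 ⟨i, hvb, hvS₀⟩
  refine ⟨main, ?_⟩
  intro F hF
  classical
  -- W part
  let g : Set V → Submodule (ZMod 2) V := fun A =>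
    if h : ∃ W : Submodule (ZMod 2) V, Module.Finite (ZMod 2) (V ⧸ W) ∧ A = (W : Set V)
    then h.choose else ⊤
  have hg : ∀ A, Module.Finite (ZMod 2) (V ⧸ g A) := by
    intro A
    by_cases h : ∃ W : Submodule (ZMod 2) V, Module.Finite (ZMod 2) (V ⧸ W) ∧ A = (W : Set V)
    · rw [show g A = h.choose from dif_pos h]; exact h.choose_spec.1
    · rw [show g A = ⊤ from dif_neg h]
      have : Subsingleton (V ⧸ (⊤ : Submodule (ZMod 2) V)) :=
        Submodule.Quotient.subsingleton_iff.mpr rfl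
      exact Module.Finite.of_finite
  have hW0 : ∀ G : Finset (Set V), Module.Finite (ZMod 2) (V ⧸ G.inf g) := by
    intro G
    induction G using Finset.induction_on with
    | empty =>
      rw [Finset.inf_empty]
      have : Subsingleton (V ⧸ (⊤ : Submodule (ZMod 2) V)) :=
        Submodule.Quotient.subsingleton_iff.mpr rfl
      exact Module.Finite.of_finite
    | insert _ _ hni ih =>
      rw [Finset.inf_insert]
      exact finCodim_inf _ _ (hg _) ih
  -- brack part
  let Pb : Set V → Prop := fun A => ∃ S ∈ 𝒜, ∃ m : ℕ, A = Set.univ \ brack S m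
  let Fb : Finset (Set V) := F.filter Pb
  let e := Fb.equivFin
  let k := Fb.card
  have hmemPb : ∀ b : Fb, Pb (b : Set V) := fun b => (Finset.mem_filter.1 b.2).2
  let Sf : Fin k → Submodule (ZMod 2) V := fun i => (hmemPb (e.symm i)).choose
  have hSfA : ∀ i, Sf i ∈ 𝒜 := fun i => (hmemPb (e.symm i)).choose_spec.1
  let nf : Fin k → ℕ := fun i => (hmemPb (e.symm i)).choose_spec.2.choose
  have hAeq : ∀ i, ((e.symm i : Fb) : Set V) = Set.univ \ brack (Sf i) (nf i) :=
    fun i => (hmemPb (e.symm i)).choose_spec.2.choose_spec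
  obtain ⟨v, hvW, hvb⟩ := main (F.inf g) (hW0 F) k Sf nf hSfA
  refine ⟨v, ?_⟩
  rintro A hA
  rw [Finset.mem_coe] at hA
  by_cases h : ∃ W : Submodule (ZMod 2) V, Module.Finite (ZMod 2) (V ⧸ W) ∧ A = (W : Set V)
  · have hle : F.inf g ≤ g A := Finset.inf_le hA
    have : (g A : Set V) = A := by
      simp only [g, dif_pos h]; exact h.choose_spec.2.symm
    rw [← this]
    exact hle hvW
  · have hPb : Pb A := (hF hA).resolve_right h
    have hAFb : A ∈ Fb := Finset.mem_filter.2 ⟨hA, hPb⟩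
    let b : Fb := ⟨A, hAFb⟩
    have := hAeq (e b)
    rw [Equiv.symm_apply_apply] at this
    have hv := Set.mem_iInter.1 hvb (e b)
    rw [← this] at hv
    exact hv
end

section
/- Let 𝒜 be a family of subspaces of V and let 𝒟 be the set of nonprincipal ultrafilters on V that contain every subspace of V of finite codimension and contain V \ S[n] for every S ∈ 𝒜 and n < ω. If D₁, D₂ ∈ 𝒟, then D₁ ⊕ D₂ ∈ 𝒟, where D₁ ⊕ D₂ = {A ⊆ V : for D₁-almost all s₁, for D₂-almost all s₂, s₁+s₂ ∈ A} (the product/sum of ultrafilters on the additive group V). -/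
open Set

/-- The sum `D₁ ⊕ D₂` of two ultrafilters on the additive group `V`:
`A ∈ D₁ ⊕ D₂` iff for `D₁`-almost all `s₁`, for `D₂`-almost all `s₂`, `s₁ + s₂ ∈ A`. -/
noncomputable def oplus (D₁ D₂ : Ultrafilter V) : Ultrafilter V :=
  D₁.bind fun s₁ => D₂.map fun s₂ => s₁ + s₂

/-- The set `𝒟` of nonprincipal ultrafilters on `V` containing every subspace of finite
codimension and containing `V \ S[n]` for every `S ∈ 𝒜` and `n < ω`. -/
def scrD (𝒜 : Set (Submodule (ZMod 2) V)) : Set (Ultrafilter V) :=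
  {D | (∀ v : V, ({v} : Set V) ∉ D) ∧
       (∀ W : Submodule (ZMod 2) V, Module.Finite (ZMod 2) (V ⧸ W) → (W : Set V) ∈ D) ∧
       (∀ S ∈ 𝒜, ∀ n : ℕ, Set.univ \ brack S n ∈ D)}

/-- `brack S n` is closed under addition. -/
lemma brack_add {S : Submodule (ZMod 2) V} {n : ℕ} {a b : V}
    (ha : a ∈ brack S n) (hb : b ∈ brack S n) : a + b ∈ brack S n := by
  obtain ⟨w, hw, s, hs, rfl⟩ := ha
  obtain ⟨w', hw', s', hs', rfl⟩ := hb
  exact ⟨w + w', add_mem hw hw', s + s', add_mem hs hs', by abel⟩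

lemma span_xb_mono {n m : ℕ} (h : n ≤ m) :
    Submodule.span (ZMod 2) {z : V | ∃ l < n, z = xb l} ≤
      Submodule.span (ZMod 2) {z : V | ∃ l < m, z = xb l} :=
  Submodule.span_mono (fun z ⟨l, hl, hz⟩ => ⟨l, lt_of_lt_of_le hl h, hz⟩)

lemma mem_span_xb (v : V) (m : ℕ) (hm : ∀ a ∈ v.support, a < m) :
    v ∈ Submodule.span (ZMod 2) {z : V | ∃ l < m, z = xb l} := by
  have h : v = ∑ a ∈ v.support, (v a) • xb a := by
    conv_lhs => rw [← Finsupp.sum_single v]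
    rw [Finsupp.sum]
    exact Finset.sum_congr rfl fun a _ => by rw [xb, Finsupp.smul_single, smul_eq_mul, mul_one]
  rw [h]
  exact Submodule.sum_mem _ fun a ha =>
    Submodule.smul_mem _ _ (Submodule.subset_span ⟨a, hm a ha, rfl⟩)

lemma oplus_mem_iff (D₁ D₂ : Ultrafilter V) (A : Set V) :
    A ∈ oplus D₁ D₂ ↔ {s₁ : V | {s₂ : V | s₁ + s₂ ∈ A} ∈ D₂} ∈ D₁ := by
  show A ∈ Filter.bind ↑D₁ (fun s₁ => ↑(D₂.map fun s₂ => s₁ + s₂)) ↔ _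
  rw [Filter.mem_bind']
  simp only [Ultrafilter.mem_coe, Ultrafilter.mem_map]
  rfl

/-- Subclaim 2: `𝒟` is closed under the operation `⊕` on ultrafilters,
where `A ∈ D₁ ⊕ D₂ ↔ {s₁ : {s₂ : s₁ + s₂ ∈ A} ∈ D₂} ∈ D₁`. -/
theorem scrD_closed_under_oplus (𝒜 : Set (Submodule (ZMod 2) V))
    (D₁ D₂ : Ultrafilter V) (h₁ : D₁ ∈ scrD 𝒜) (h₂ : D₂ ∈ scrD 𝒜) :
    (∀ A : Set V, A ∈ oplus D₁ D₂ ↔ {s₁ : V | {s₂ : V | s₁ + s₂ ∈ A} ∈ D₂} ∈ D₁) ∧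
    oplus D₁ D₂ ∈ scrD 𝒜 := by
  refine ⟨oplus_mem_iff D₁ D₂, ?_, ?_, ?_⟩
  · -- nonprincipal
    intro v hv
    rw [oplus_mem_iff] at hv
    have key : {s₁ : V | {s₂ : V | s₁ + s₂ ∈ ({v} : Set V)} ∈ D₂} = ∅ := by
      ext s₁
      simp only [mem_setOf_eq, mem_singleton_iff, mem_empty_iff_false, iff_false]
      intro hs
      refine h₂.1 (s₁ + v) ?_
      have : {s₂ : V | s₁ + s₂ = v} = ({s₁ + v} : Set V) := by
        ext s₂
        simp only [mem_setOf_eq, mem_singleton_iff]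
        constructor
        · intro h
          have : s₁ + (s₁ + s₂) = s₁ + v := by rw [h]
          rwa [← add_assoc, V_add_self, zero_add] at this
        · rintro rfl
          rw [← add_assoc, V_add_self, zero_add]
      rwa [this] at hs
    rw [key] at hv
    exact Ultrafilter.empty_notMem hv
  · -- finite codimension subspaces
    intro W hW
    rw [oplus_mem_iff]
    refine Filter.mem_of_superset (h₁.2.1 W hW) fun s₁ hs₁ => ?_
    exact Filter.mem_of_superset (h₂.2.1 W hW) fun s₂ hs₂ => W.add_mem hs₁ hs₂
  · -- complements of brackets
    intro S hS n
    rw [oplus_mem_iff]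
    have hBnot : {s₁ : V | {s₂ : V | s₁ + s₂ ∈ brack S n} ∈ D₂} ∉ D₁ := by
      intro hB
      obtain ⟨t, ht⟩ := Ultrafilter.nonempty_of_mem hB
      set m := max (t.support.sup id + 1) n with hm
      have htm : t ∈ Submodule.span (ZMod 2) {z : V | ∃ l < m, z = xb l} :=
        mem_span_xb t m fun a ha =>
          lt_of_lt_of_le (Nat.lt_succ_of_le (Finset.le_sup (f := id) ha)) (le_max_left _ _)
      have hBsub : {s₁ : V | {s₂ : V | s₁ + s₂ ∈ brack S n} ∈ D₂} ⊆ brack S m := by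
        intro s₁ hs₁
        have hint : {s₂ : V | t + s₂ ∈ brack S n} ∩ {s₂ : V | s₁ + s₂ ∈ brack S n} ∈ D₂ :=
          Filter.inter_mem ht hs₁
        obtain ⟨s₂, hts₂, hss₂⟩ := Ultrafilter.nonempty_of_mem hint
        have hsum : t + s₁ ∈ brack S n := by
          have h' := brack_add hts₂ hss₂
          have e : (t + s₂) + (s₁ + s₂) = t + s₁ := by
            have e2 : (t + s₂) + (s₁ + s₂) = (t + s₁) + (s₂ + s₂) := by abel
            rw [e2, V_add_self, add_zero]
          rwa [e] at h'
        obtain ⟨w, hw, s, hs, hws⟩ := hsum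
        refine ⟨t + w, add_mem htm (span_xb_mono (le_max_right _ _) hw), s, hs, ?_⟩
        calc s₁ = t + (t + s₁) := by rw [← add_assoc, V_add_self, zero_add]
          _ = (t + w) + s := by rw [hws, add_assoc]
      have hBm : brack S m ∈ D₁ := Filter.mem_of_superset hB hBsub
      have hc := h₁.2.2 S hS m
      obtain ⟨x, hx1, hx2⟩ := Ultrafilter.nonempty_of_mem (Filter.inter_mem hBm hc)
      exact hx2.2 hx1
    have hset : {s₁ : V | {s₂ : V | s₁ + s₂ ∈ Set.univ \ brack S n} ∈ D₂} =
        {s₁ : V | {s₂ : V | s₁ + s₂ ∈ brack S n} ∈ D₂}ᶜ := by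
      ext s₁
      simp only [mem_setOf_eq, mem_compl_iff]
      have : {s₂ : V | s₁ + s₂ ∈ Set.univ \ brack S n} =
          {s₂ : V | s₁ + s₂ ∈ brack S n}ᶜ := by
        ext s₂; simp [Set.mem_diff]
      rw [this, Ultrafilter.compl_mem_iff_notMem]
    rw [hset, Ultrafilter.compl_mem_iff_notMem]
    exact hBnot
end

section
/- Let 𝒜 be an infinite family of pairwise almost disjoint infinite-dimensional subspaces of V. Then there exists a nonprincipal ultrafilter D on V such that D ⊕ D = D, every subspace of V of finite codimension belongs to D, and V \ S[n] ∈ D for every S ∈ 𝒜 and n < ω (in particular no member of 𝒜 belongs to D). -/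
open Set

noncomputable def spanlt (n : ℕ) : Submodule (ZMod 2) V :=
  Submodule.span (ZMod 2) {z : V | ∃ l < n, z = xb l}

lemma mem_spanlt (v : V) (m : ℕ) (h : ∀ l ∈ v.support, l < m) : v ∈ spanlt m := by
  have hv : v = v.sum fun l c => Finsupp.single l c := (Finsupp.sum_single v).symm
  rw [hv]
  apply Submodule.sum_mem
  intro l hl
  have : Finsupp.single l (v l) = (v l) • xb l := by
    rw [xb, Finsupp.smul_single, smul_eq_mul, mul_one]
  show Finsupp.single l (v l) ∈ spanlt m
  rw [this]
  exact Submodule.smul_mem _ _ (Submodule.subset_span ⟨l, h l hl, rfl⟩)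

lemma exists_mem_spanlt (v : V) (n : ℕ) : ∃ m, n ≤ m ∧ v ∈ spanlt m := by
  refine ⟨max n (v.support.sup id + 1), le_max_left _ _, mem_spanlt v _ ?_⟩
  intro l hl
  have := Finset.le_sup (f := id) hl
  simp only [id] at this
  omega

lemma spanlt_mono {n m : ℕ} (h : n ≤ m) : spanlt n ≤ spanlt m :=
  Submodule.span_mono (by rintro z ⟨l, hl, rfl⟩; exact ⟨l, lt_of_lt_of_le hl h, rfl⟩)

lemma spanlt_finite (n : ℕ) : (↑(spanlt n) : Set V).Finite := by
  have hfin : {z : V | ∃ l < n, z = xb l}.Finite := by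
    have : {z : V | ∃ l < n, z = xb l} ⊆ xb '' {l | l < n} := by
      rintro z ⟨l, hl, rfl⟩; exact ⟨l, hl, rfl⟩
    exact Set.Finite.subset ((Set.finite_Iio n).image xb) this
  have : Module.Finite (ZMod 2) ↥(spanlt n) := Module.Finite.span_of_finite _ hfin
  have : Finite ↥(spanlt n) := Module.finite_of_finite (ZMod 2)
  exact Set.toFinite _

lemma finite_of_addHom {G H : Type*} [AddCommGroup G] [AddCommGroup H] (f : G →+ H)
    (hH : Finite H) (hker : {g : G | f g = 0}.Finite) : Finite G := by
  rw [← Set.finite_univ_iff]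
  have huniv : (Set.univ : Set G) = ⋃ h : H, f ⁻¹' {h} := by ext g; simp
  rw [huniv]
  apply Set.finite_iUnion
  intro h
  rcases (f ⁻¹' {h}).eq_empty_or_nonempty with he | ⟨g₀, hg₀⟩
  · simp [he]
  · apply Set.Finite.subset (hker.image (g₀ + ·))
    intro g hg
    refine ⟨g - g₀, ?_, by simp⟩
    simp only [mem_setOf_eq, map_sub]
    rw [show f g = h from hg, show f g₀ = h from hg₀, sub_self]

lemma infinite_coe_of_not_moduleFinite {T : Submodule (ZMod 2) V}
    (h : ¬ Module.Finite (ZMod 2) ↥T) : (↑T : Set V).Infinite := by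
  have hinf : Infinite ↥T := by
    rw [← not_finite_iff_infinite]
    exact fun hf => h Module.Finite.of_finite
  exact Set.infinite_coe_iff.mp hinf

lemma inf_fincodim (T W : Submodule (ZMod 2) V)
    (hT : ¬ Module.Finite (ZMod 2) ↥T) (hW : Module.Finite (ZMod 2) (V ⧸ W)) :
    ¬ Module.Finite (ZMod 2) ↥(T ⊓ W) := by
  intro h
  apply hT
  have h1 : Finite ↥(T ⊓ W) := Module.finite_of_finite (ZMod 2)
  have h2 : Finite (V ⧸ W) := Module.finite_of_finite (ZMod 2)
  have hker : {g : ↥T | (W.mkQ.comp T.subtype).toAddMonoidHom g = 0}.Finite := by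
    have heq : {g : ↥T | (W.mkQ.comp T.subtype).toAddMonoidHom g = 0}
        = Subtype.val ⁻¹' (↑(T ⊓ W) : Set V) := by
      ext g
      simp [Submodule.mem_inf, g.2, Submodule.Quotient.mk_eq_zero]
    rw [heq]
    exact Set.Finite.preimage Subtype.val_injective.injOn (Set.toFinite _)
  have : Finite ↥T := finite_of_addHom _ h2 hker
  exact Module.Finite.of_finite

lemma brack_eq (S : Submodule (ZMod 2) V) (n : ℕ) : brack S n = ↑(spanlt n ⊔ S) := by
  ext v
  simp only [brack, SetLike.mem_coe, Submodule.mem_sup, mem_setOf_eq, spanlt]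
  constructor
  · rintro ⟨w, hw, s, hs, rfl⟩; exact ⟨w, hw, s, hs, rfl⟩
  · rintro ⟨w, hw, s, hs, rfl⟩; exact ⟨w, hw, s, hs, rfl⟩

lemma inter_brack_finite {S T : Submodule (ZMod 2) V} (hST : ((T : Set V) ∩ S).Finite)
    (n : ℕ) : ((T : Set V) ∩ brack S n).Finite := by
  have hsub : (T : Set V) ∩ brack S n ⊆
      ⋃ w ∈ (↑(spanlt n) : Set V), (T : Set V) ∩ {t | t - w ∈ S} := by
    rintro t ⟨htT, w, hw, s, hs, rfl⟩
    refine mem_biUnion hw ⟨htT, ?_⟩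
    simp only [mem_setOf_eq, add_sub_cancel_left]
    exact hs
  refine Set.Finite.subset (Set.Finite.biUnion (spanlt_finite n) ?_) hsub
  intro w _
  rcases Set.eq_empty_or_nonempty ((T : Set V) ∩ {t | t - w ∈ S}) with he | ⟨t₀, ht₀T, ht₀⟩
  · simp [he]
  · apply Set.Finite.subset (hST.image (t₀ + ·))
    rintro t ⟨htT, ht⟩
    refine ⟨t - t₀, ⟨?_, ?_⟩, by simp⟩
    · exact Submodule.sub_mem T htT ht₀T
    · have : t - t₀ = (t - w) - (t₀ - w) := by abel
      rw [SetLike.mem_coe, this]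
      exact Submodule.sub_mem S ht ht₀

lemma subset_brack (S : Submodule (ZMod 2) V) (n : ℕ) : (S : Set V) ⊆ brack S n :=
  fun s hs => ⟨0, Submodule.zero_mem _, s, hs, (zero_add s).symm⟩

def famG (𝒜 : Set (Submodule (ZMod 2) V)) : Set (Set V) :=
  {A | ∃ W : Submodule (ZMod 2) V, Module.Finite (ZMod 2) (V ⧸ W) ∧ A = ↑W} ∪
  {A | ∃ S ∈ 𝒜, ∃ n : ℕ, A = univ \ brack S n} ∪
  {A | ∃ v : V, A = {v}ᶜ}

lemma brack_subsingleton (𝒜 : Set (Submodule (ZMod 2) V))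
    (hdim : ∀ S ∈ 𝒜, ¬ Module.Finite (ZMod 2) ↥S)
    (had : ∀ S₁ ∈ 𝒜, ∀ S₂ ∈ 𝒜, S₁ ≠ S₂ → ((S₁ : Set V) ∩ (S₂ : Set V)).Finite)
    (A : Set V) : Set.Subsingleton {S | S ∈ 𝒜 ∧ ∃ n, A = univ \ brack S n} := by
  rintro S ⟨hS, n, rfl⟩ S' ⟨hS', n', hA⟩
  by_contra hne
  have hbr : brack S n = brack S' n' := by
    have := hA
    rw [← Set.compl_eq_univ_diff, ← Set.compl_eq_univ_diff] at this
    exact compl_injective this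
  have h1 : ((S : Set V) ∩ brack S' n').Finite :=
    inter_brack_finite (had S hS S' hS' hne) n'
  have h2 : (S : Set V) ⊆ brack S' n' := hbr ▸ subset_brack S n
  have h3 : ((S : Set V) ∩ brack S' n') = (S : Set V) := Set.inter_eq_self_of_subset_left h2
  rw [h3] at h1
  exact (infinite_coe_of_not_moduleFinite (hdim S hS)) h1

lemma exists_P (T : Submodule (ZMod 2) V) (hT : ¬ Module.Finite (ZMod 2) ↥T)
    {t : Set (Set V)} (htfin : t.Finite) :
    ∃ P : Submodule (ZMod 2) V, ¬ Module.Finite (ZMod 2) ↥P ∧ P ≤ T ∧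
      ∀ A ∈ t, (∃ W : Submodule (ZMod 2) V, Module.Finite (ZMod 2) (V ⧸ W) ∧ A = ↑W) →
        (P : Set V) ⊆ A := by
  refine Set.Finite.induction_on t htfin ⟨T, hT, le_rfl, by simp⟩ ?_
  intro A s _ _ ih
  obtain ⟨P, hP1, hP2, hP3⟩ := ih
  by_cases hAW : ∃ W : Submodule (ZMod 2) V, Module.Finite (ZMod 2) (V ⧸ W) ∧ A = ↑W
  · obtain ⟨W, hWf, rfl⟩ := hAW
    refine ⟨P ⊓ W, inf_fincodim P W hP1 hWf, inf_le_left.trans hP2, ?_⟩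
    rintro B (rfl | hB) hBW
    · intro x hx
      exact (Submodule.mem_inf.mp hx).2
    · exact fun x hx => hP3 B hB hBW ((Submodule.mem_inf.mp hx).1)
  · refine ⟨P, hP1, hP2, ?_⟩
    rintro B (rfl | hB) hBW
    · exact absurd hBW hAW
    · exact hP3 B hB hBW

lemma famG_inter (𝒜 : Set (Submodule (ZMod 2) V)) (hinf : 𝒜.Infinite)
    (hdim : ∀ S ∈ 𝒜, ¬ Module.Finite (ZMod 2) ↥S)
    (had : ∀ S₁ ∈ 𝒜, ∀ S₂ ∈ 𝒜, S₁ ≠ S₂ → ((S₁ : Set V) ∩ (S₂ : Set V)).Finite)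
    {t : Set (Set V)} (htG : t ⊆ famG 𝒜) (htfin : t.Finite) : (⋂₀ t).Nonempty := by
  classical
  set 𝒮 : Set (Submodule (ZMod 2) V) :=
    ⋃ A ∈ t, {S | S ∈ 𝒜 ∧ ∃ n, A = univ \ brack S n} with h𝒮
  have h𝒮fin : 𝒮.Finite :=
    Set.Finite.biUnion htfin fun A _ => (brack_subsingleton 𝒜 hdim had A).finite
  obtain ⟨T, hT𝒜, hT𝒮⟩ := (hinf.diff h𝒮fin).nonempty
  obtain ⟨P, hP1, hP2, hP3⟩ := exists_P T (hdim T hT𝒜) htfin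
  have hcase : ∀ A ∈ t, ∃ F : Set V, F.Finite ∧ (P : Set V) \ F ⊆ A := by
    intro A hA
    rcases htG hA with (h1 | h2) | h3
    · exact ⟨∅, Set.finite_empty, by simpa using hP3 A hA h1⟩
    · obtain ⟨S, hS𝒜, n, rfl⟩ := h2
      have hST : T ≠ S := by
        rintro rfl
        exact hT𝒮 (Set.mem_biUnion hA ⟨hT𝒜, n, rfl⟩)
      refine ⟨(T : Set V) ∩ brack S n, inter_brack_finite (had T hT𝒜 S hS𝒜 hST) n, ?_⟩
      rintro x ⟨hxP, hxF⟩
      refine ⟨trivial, fun hxb => hxF ⟨hP2 hxP, hxb⟩⟩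
    · obtain ⟨v, rfl⟩ := h3
      exact ⟨{v}, Set.finite_singleton v, fun x hx => hx.2⟩
  choose! F hFfin hFsub using hcase
  have hJ : (⋃ A ∈ t, F A).Finite := Set.Finite.biUnion htfin fun A hA => hFfin A hA
  have hPinf : (P : Set V).Infinite := infinite_coe_of_not_moduleFinite hP1
  obtain ⟨x, hxP, hxJ⟩ := (hPinf.diff hJ).nonempty
  refine ⟨x, fun A hA => hFsub A hA ⟨hxP, fun hxF => hxJ (Set.mem_biUnion hA hxF)⟩⟩

lemma mem_oplus {D₁ D₂ : Ultrafilter V} {A : Set V} :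
    A ∈ oplus D₁ D₂ ↔ {s₁ | {s₂ | s₁ + s₂ ∈ A} ∈ D₂} ∈ D₁ := Iff.rfl

lemma scrD_nonempty (𝒜 : Set (Submodule (ZMod 2) V)) (hinf : 𝒜.Infinite)
    (hdim : ∀ S ∈ 𝒜, ¬ Module.Finite (ZMod 2) ↥S)
    (had : ∀ S₁ ∈ 𝒜, ∀ S₂ ∈ 𝒜, S₁ ≠ S₂ → ((S₁ : Set V) ∩ (S₂ : Set V)).Finite) :
    (scrD 𝒜).Nonempty := by
  have hne : Filter.NeBot (Filter.generate (famG 𝒜)) :=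
    Filter.generate_neBot_iff.mpr fun t hts htfin => famG_inter 𝒜 hinf hdim had hts htfin
  refine ⟨Ultrafilter.of (Filter.generate (famG 𝒜)), ?_, ?_, ?_⟩
  · intro v hv
    have : ({v}ᶜ : Set V) ∈ Ultrafilter.of (Filter.generate (famG 𝒜)) :=
      Ultrafilter.of_le _ (Filter.mem_generate_of_mem (Or.inr ⟨v, rfl⟩))
    exact (Ultrafilter.compl_mem_iff_notMem.mp this) hv
  · intro W hW
    exact Ultrafilter.of_le _ (Filter.mem_generate_of_mem (Or.inl (Or.inl ⟨W, hW, rfl⟩)))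
  · intro S hS n
    exact Ultrafilter.of_le _ (Filter.mem_generate_of_mem (Or.inl (Or.inr ⟨S, hS, n, rfl⟩)))

lemma oplus_mem_scrD {𝒜 : Set (Submodule (ZMod 2) V)} {D₁ D₂ : Ultrafilter V}
    (h₁ : D₁ ∈ scrD 𝒜) (h₂ : D₂ ∈ scrD 𝒜) : oplus D₁ D₂ ∈ scrD 𝒜 := by
  obtain ⟨h₁p, h₁W, h₁b⟩ := h₁
  obtain ⟨h₂p, h₂W, h₂b⟩ := h₂
  refine ⟨?_, ?_, ?_⟩
  · intro v hv
    rw [mem_oplus] at hv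
    have : {s₁ : V | {s₂ : V | s₁ + s₂ ∈ ({v} : Set V)} ∈ D₂} = ∅ := by
      ext s₁
      simp only [mem_setOf_eq, mem_singleton_iff, mem_empty_iff_false, iff_false]
      intro hmem
      apply h₂p (v - s₁)
      have : {s₂ : V | s₁ + s₂ = v} = ({v - s₁} : Set V) := by
        ext s₂; constructor
        · rintro rfl; simp
        · rintro rfl; simp
      rwa [this] at hmem
    rw [this] at hv
    exact Ultrafilter.empty_notMem hv
  · intro W hW
    rw [mem_oplus]
    apply Filter.mem_of_superset (h₁W W hW)
    intro s₁ hs₁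
    apply Filter.mem_of_superset (h₂W W hW)
    intro s₂ hs₂
    exact Submodule.add_mem W hs₁ hs₂
  · intro S hS n
    rw [mem_oplus]
    have : {s₁ : V | {s₂ : V | s₁ + s₂ ∈ univ \ brack S n} ∈ D₂} = univ := by
      rw [Set.eq_univ_iff_forall]
      intro s₁
      obtain ⟨m, hnm, hs₁⟩ := exists_mem_spanlt s₁ n
      apply Filter.mem_of_superset (h₂b S hS m)
      rintro s₂ ⟨-, hs₂⟩
      refine ⟨trivial, fun hb => hs₂ ?_⟩
      -- s₁ + s₂ ∈ brack S n ⊆ brack S m, s₁ ∈ spanlt m ⊆ brack S m ⇒ s₂ ∈ brack S m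
      rw [brack_eq] at hb ⊢
      have hs₁' : s₁ ∈ spanlt m ⊔ S := Submodule.mem_sup_left hs₁
      have hb' : s₁ + s₂ ∈ spanlt m ⊔ S :=
        (sup_le_sup_right (spanlt_mono hnm) S) hb
      have : s₂ = (s₁ + s₂) - s₁ := by abel
      rw [SetLike.mem_coe, this]
      exact Submodule.sub_mem _ hb' hs₁'
    rw [this]
    exact Filter.univ_mem

lemma scrD_closed (𝒜 : Set (Submodule (ZMod 2) V)) : IsClosed (scrD 𝒜) := by
  have heq : scrD 𝒜 =
      (⋂ v : V, {D : Ultrafilter V | ({v} : Set V) ∈ D}ᶜ) ∩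
      ((⋂ W : Submodule (ZMod 2) V, ⋂ _h : Module.Finite (ZMod 2) (V ⧸ W),
          {D : Ultrafilter V | (W : Set V) ∈ D}) ∩
        ⋂ S ∈ 𝒜, ⋂ n : ℕ, {D : Ultrafilter V | univ \ brack S n ∈ D}) := by
    ext D
    simp only [scrD, mem_setOf_eq, mem_inter_iff, mem_iInter, mem_compl_iff]
  rw [heq]
  refine IsClosed.inter (isClosed_iInter fun v =>
      (ultrafilter_isOpen_basic _).isClosed_compl) (IsClosed.inter ?_ ?_)
  · exact isClosed_iInter fun W => isClosed_iInter fun _ => ultrafilter_isClosed_basic _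
  · exact isClosed_iInter fun S => isClosed_iInter fun _ =>
      isClosed_iInter fun n => ultrafilter_isClosed_basic _

attribute [local instance] Ultrafilter.add Ultrafilter.addSemigroup

lemma oplus_eq (D₁ D₂ : Ultrafilter V) : oplus D₁ D₂ = D₁ + D₂ := by
  apply Ultrafilter.coe_inj.mp
  apply Filter.ext
  intro A
  rw [show (A ∈ (oplus D₁ D₂ : Filter V)) ↔ A ∈ oplus D₁ D₂ from Iff.rfl, mem_oplus]
  have := Ultrafilter.eventually_add D₁ D₂ (· ∈ A)
  simp only [Filter.Eventually] at this ⊢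
  exact (this.symm : _)

/-- There is an idempotent ultrafilter in `𝒟`: a nonprincipal ultrafilter `D` on `V` with
`D ⊕ D = D`, containing every subspace of finite codimension and every `V \ S[n]`
(in particular no member of `𝒜` belongs to `D`). -/
theorem exists_idempotent_in_scrD (𝒜 : Set (Submodule (ZMod 2) V)) (hinf : 𝒜.Infinite)
    (hdim : ∀ S ∈ 𝒜, ¬ Module.Finite (ZMod 2) ↥S)
    (had : ∀ S₁ ∈ 𝒜, ∀ S₂ ∈ 𝒜, S₁ ≠ S₂ → ((S₁ : Set V) ∩ (S₂ : Set V)).Finite) :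
    ∃ D : Ultrafilter V,
      (∀ v : V, ({v} : Set V) ∉ D) ∧
      oplus D D = D ∧
      (∀ W : Submodule (ZMod 2) V, Module.Finite (ZMod 2) (V ⧸ W) → (W : Set V) ∈ D) ∧
      (∀ S ∈ 𝒜, ∀ n : ℕ, Set.univ \ brack S n ∈ D) ∧
      (∀ S ∈ 𝒜, (S : Set V) ∉ D) := by
  obtain ⟨D, hD, hidem⟩ :=
    exists_idempotent_in_compact_add_subsemigroup
      (fun r => Ultrafilter.continuous_add_left r) (scrD 𝒜)
      (scrD_nonempty 𝒜 hinf hdim had) ((scrD_closed 𝒜).isCompact)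
      (fun x hx y hy => oplus_eq x y ▸ oplus_mem_scrD hx hy)
  obtain ⟨hp, hW, hb⟩ := hD
  refine ⟨D, hp, by rw [oplus_eq]; exact hidem, hW, hb, ?_⟩
  intro S hS hSD
  have h1 : Set.univ \ brack S 0 ∈ D := hb S hS 0
  have h2 : ((S : Set V) ∩ (Set.univ \ brack S 0)) ∈ D := Filter.inter_mem hSD h1
  obtain ⟨x, hxS, -, hxb⟩ := Filter.nonempty_of_mem h2
  exact hxb (subset_brack S 0 hxS)
end
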